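/- Let ℛ' = (0,1/√3)×(0,1) and K₂'x = −x + (1/√3, 1), so that 𝒯 together with K₁' = id and K₂' tiles ℛ'. For λ ∈ (0,1) set x_λ = λ(1/√3,0) + (1−λ)(0,1); then x_λ ∈ ∂𝒯 and K₂'(x_λ) = x_{1−λ}. Moreover, for every pair (δ₁,δ₂) ∈ {−1,1}², there exist a continuous function φ : ℝ² → ℝ vanishing on ∂ℛ' and a point x ∈ ∂𝒯 such that δ₁φ(x) + δ₂φ(K₂'x) ≠ 0; hence this tiling of ℛ' by 𝒯 is not admissible. -/
import Mathlib


open Real Set MeasureTheory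

noncomputable section

/-- The open triangle with vertices `(0,0)`, `(1/√3, 0)`, `(0,1)`. -/
def Tri : Set (ℝ × ℝ) := {p | 0 < p.1 ∧ 0 < p.2 ∧ Real.sqrt 3 * p.1 + p.2 < 1}

/-- The open rectangle `(0,√3) × (0,1)`. -/
def Rect : Set (ℝ × ℝ) := Set.Ioo (0 : ℝ) (Real.sqrt 3) ×ˢ Set.Ioo (0 : ℝ) 1

/-- The rotation matrix `((cos π/3, sin π/3), (−sin π/3, cos π/3))` acting on `ℝ²`. -/
def rot0 (p : ℝ × ℝ) : ℝ × ℝ :=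
  (Real.cos (π / 3) * p.1 + Real.sin (π / 3) * p.2,
   -Real.sin (π / 3) * p.1 + Real.cos (π / 3) * p.2)

/-- The Pauli matrix `σ_z` acting on `ℝ²`. -/
def sz (p : ℝ × ℝ) : ℝ × ℝ := (p.1, -p.2)

def v1 : ℝ × ℝ := (1 / Real.sqrt 3, 0)

def v2 : ℝ × ℝ := ((0 : ℝ), 1)

/-- The six rigid transformations `K₁, …, K₆` (indexed by `0, …, 5`). -/
def K : Fin 6 → (ℝ × ℝ) → (ℝ × ℝ) :=
  ![fun x => x,
    fun x => -rot0 (sz (x - v2)) + v2,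
    fun x => rot0 (x - v2) + v2,
    fun x => -rot0 (x - v2) + (3 : ℝ) • v1,
    fun x => -rot0 (x - v2) + (3 : ℝ) • v1 + v2,
    fun x => -x + (3 : ℝ) • v1 + v2]

/-- The coefficients `δ = (1,−1,1,1,−1,1)`. -/
def del : Fin 6 → ℝ := ![1, -1, 1, 1, -1, 1]

/-- The eigenfunctions `ē_k` on the rectangle. -/
def ebar (k : ℕ × ℕ) (p : ℝ × ℝ) : ℝ :=
  Real.sin (π * k.1 * p.1 / Real.sqrt 3) * Real.sin (π * k.2 * p.2)

/-- The eigenfunctions `e_k(x) = Σ_h δ_h ē_k(K_h x)`. -/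
def efun (k : ℕ × ℕ) (p : ℝ × ℝ) : ℝ :=
  ∑ h : Fin 6, del h * ebar k (K h p)

end

/-- The rectangle `ℛ' = (0,1/√3) × (0,1)`. -/
noncomputable def Rect' : Set (ℝ × ℝ) := Set.Ioo (0 : ℝ) (1 / Real.sqrt 3) ×ˢ Set.Ioo (0 : ℝ) 1

/-- The map `K₂' x = −x + (1/√3, 1)`. -/
noncomputable def K2' (x : ℝ × ℝ) : ℝ × ℝ := -x + (1 / Real.sqrt 3, 1)


private lemma sqrt3_pos : (0:ℝ) < Real.sqrt 3 := Real.sqrt_pos.mpr (by norm_num)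
private lemma sqrt3_sq : Real.sqrt 3 * Real.sqrt 3 = 3 := Real.mul_self_sqrt (by norm_num)
private lemma sqrt3_inv : Real.sqrt 3 * (1 / Real.sqrt 3) = 1 := by
  field_simp

private lemma triOpen : IsOpen Tri := by
  have h1 : IsOpen {p : ℝ×ℝ | 0 < p.1} := isOpen_lt continuous_const continuous_fst
  have h2 : IsOpen {p : ℝ×ℝ | 0 < p.2} := isOpen_lt continuous_const continuous_snd
  have h3 : IsOpen {p : ℝ×ℝ | Real.sqrt 3 * p.1 + p.2 < 1} :=
    isOpen_lt (by fun_prop) continuous_const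
  have he : Tri = {p : ℝ×ℝ | 0 < p.1} ∩ ({p : ℝ×ℝ | 0 < p.2} ∩ {p : ℝ×ℝ | Real.sqrt 3 * p.1 + p.2 < 1}) := by
    ext p; simp [Tri, and_assoc]
  rw [he]; exact h1.inter (h2.inter h3)

private lemma closTri : closure Tri
    = {p : ℝ×ℝ | 0 ≤ p.1 ∧ 0 ≤ p.2 ∧ Real.sqrt 3 * p.1 + p.2 ≤ 1} := by
  apply Subset.antisymm
  · apply closure_minimal
    · rintro p ⟨h1, h2, h3⟩; exact ⟨h1.le, h2.le, h3.le⟩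
    · have h1 : IsClosed {p : ℝ×ℝ | 0 ≤ p.1} := isClosed_le continuous_const continuous_fst
      have h2 : IsClosed {p : ℝ×ℝ | 0 ≤ p.2} := isClosed_le continuous_const continuous_snd
      have h3 : IsClosed {p : ℝ×ℝ | Real.sqrt 3 * p.1 + p.2 ≤ 1} :=
        isClosed_le (by fun_prop) continuous_const
      have he : {p : ℝ×ℝ | 0 ≤ p.1 ∧ 0 ≤ p.2 ∧ Real.sqrt 3 * p.1 + p.2 ≤ 1}
          = {p : ℝ×ℝ | 0 ≤ p.1} ∩ ({p : ℝ×ℝ | 0 ≤ p.2} ∩ {p : ℝ×ℝ | Real.sqrt 3 * p.1 + p.2 ≤ 1}) := by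
        ext p; simp [and_assoc]
      rw [he]; exact h1.inter (h2.inter h3)
  · rintro p ⟨h1, h2, h3⟩
    have hc1 : (0:ℝ) < 1/(4*Real.sqrt 3) := by positivity
    have hc1' : Real.sqrt 3 * (1/(4*Real.sqrt 3)) = 1/4 := by
      rw [mul_one_div]; rw [div_eq_iff (by positivity)]; ring
    have key : Filter.Tendsto
        (fun t : ℝ => (((1-t)*(1/(4*Real.sqrt 3)) + t*p.1, (1-t)*(1/4) + t*p.2) : ℝ×ℝ))
        (nhdsWithin 1 (Set.Iio 1)) (nhds p) := by
      have hcont : Filter.Tendsto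
          (fun t : ℝ => (((1-t)*(1/(4*Real.sqrt 3)) + t*p.1, (1-t)*(1/4) + t*p.2) : ℝ×ℝ))
          (nhds 1) (nhds ((1-1)*(1/(4*Real.sqrt 3)) + 1*p.1, (1-1)*(1/4) + 1*p.2)) := by
        apply Continuous.tendsto; fun_prop
      simp only [sub_self, zero_mul, zero_add, one_mul] at hcont
      exact hcont.mono_left nhdsWithin_le_nhds
    refine mem_closure_of_tendsto key ?_
    filter_upwards [Ioo_mem_nhdsLT_of_mem (by norm_num : (1:ℝ) ∈ Set.Ioc 0 1)] with t ht
    obtain ⟨ht0, ht1⟩ := ht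
    refine ⟨by nlinarith, by nlinarith, ?_⟩
    have expand : Real.sqrt 3 * ((1-t)*(1/(4*Real.sqrt 3)) + t*p.1) + ((1-t)*(1/4)+t*p.2)
        = (1-t)*(Real.sqrt 3 * (1/(4*Real.sqrt 3)) + 1/4) + t*(Real.sqrt 3*p.1 + p.2) := by ring
    show Real.sqrt 3 * ((1-t)*(1/(4*Real.sqrt 3)) + t*p.1) + ((1-t)*(1/4)+t*p.2) < 1
    rw [expand, hc1']
    nlinarith [mul_le_mul_of_nonneg_left h3 ht0.le]

private lemma K2fst (x : ℝ×ℝ) : (K2' x).1 = 1/Real.sqrt 3 - x.1 := by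
  simp [K2']; ring
private lemma K2snd (x : ℝ×ℝ) : (K2' x).2 = 1 - x.2 := by
  simp [K2']; ring
private lemma K2invol (x : ℝ×ℝ) : K2' (K2' x) = x := by
  apply Prod.ext
  · rw [K2fst, K2fst]; ring
  · rw [K2snd, K2snd]; ring

private lemma imgK2 : K2' '' closure Tri
    = {q : ℝ×ℝ | q.1 ≤ 1/Real.sqrt 3 ∧ q.2 ≤ 1 ∧ 1 ≤ Real.sqrt 3 * q.1 + q.2} := by
  rw [closTri]; ext q; constructor
  · rintro ⟨x, ⟨h1, h2, h3⟩, rfl⟩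
    rw [Set.mem_setOf_eq, K2fst, K2snd]
    refine ⟨by linarith, by linarith, ?_⟩
    rw [mul_sub, sqrt3_inv]; linarith
  · rintro ⟨h1, h2, h3⟩
    refine ⟨K2' q, ?_, K2invol q⟩
    rw [Set.mem_setOf_eq, K2fst, K2snd, mul_sub, sqrt3_inv]
    exact ⟨by linarith, by linarith, by linarith⟩

private lemma closRect : closure Rect' = Set.Icc (0:ℝ) (1/Real.sqrt 3) ×ˢ Set.Icc (0:ℝ) 1 := by
  rw [Rect', closure_prod_eq, closure_Ioo (by positivity : (0:ℝ) < 1/Real.sqrt 3).ne,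
    closure_Ioo one_ne_zero.symm]

/-- `𝒯` together with `id` and `K₂'` tiles `ℛ'`; the points
`x_λ = λ(1/√3,0) + (1−λ)(0,1)` lie on `∂𝒯` and satisfy `K₂'(x_λ) = x_{1−λ}`; and for
every choice of signs `(δ₁,δ₂)` there is a continuous function `φ` vanishing on `∂ℛ'`
whose folding does not vanish on `∂𝒯`: this tiling is not admissible. -/
theorem stmt3 :
    (closure Rect' = closure Tri ∪ K2' '' closure Tri ∧ Disjoint Tri (K2' '' Tri)) ∧
    (∀ lam : ℝ, lam ∈ Set.Ioo (0 : ℝ) 1 →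
      (lam • v1 + (1 - lam) • v2) ∈ frontier Tri ∧
      K2' (lam • v1 + (1 - lam) • v2) = (1 - lam) • v1 + (1 - (1 - lam)) • v2) ∧
    (∀ d₁ d₂ : ℝ, (d₁ = 1 ∨ d₁ = -1) → (d₂ = 1 ∨ d₂ = -1) →
      ∃ φ : ℝ × ℝ → ℝ, Continuous φ ∧ (∀ x ∈ frontier Rect', φ x = 0) ∧
        ∃ x ∈ frontier Tri, d₁ * φ x + d₂ * φ (K2' x) ≠ 0) := by
  refine ⟨⟨?_, ?_⟩, ?_, ?_⟩
  · -- tiling equality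
    rw [closRect, imgK2, closTri]
    ext q
    simp only [Set.mem_prod, Set.mem_Icc, Set.mem_union, Set.mem_setOf_eq]
    constructor
    · rintro ⟨⟨ha, hb⟩, hc, hd⟩
      rcases le_total (Real.sqrt 3 * q.1 + q.2) 1 with h | h
      · exact Or.inl ⟨ha, hc, h⟩
      · exact Or.inr ⟨hb, hd, h⟩
    · rintro (⟨ha, hb, hc⟩ | ⟨ha, hb, hc⟩)
      · have hq1 : q.1 ≤ 1/Real.sqrt 3 := by
          rw [le_div_iff₀ sqrt3_pos, mul_comm]; linarith
        exact ⟨⟨ha, hq1⟩, hb, by nlinarith [mul_nonneg sqrt3_pos.le ha]⟩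
      · have hs : Real.sqrt 3 * q.1 ≤ Real.sqrt 3 * (1/Real.sqrt 3) :=
          mul_le_mul_of_nonneg_left ha sqrt3_pos.le
        rw [sqrt3_inv] at hs
        refine ⟨⟨?_, ha⟩, ?_, hb⟩
        · nlinarith [sqrt3_pos]
        · linarith
  · -- disjointness
    rw [Set.disjoint_left]
    rintro a ⟨h1, h2, h3⟩ ⟨y, ⟨g1, g2, g3⟩, rfl⟩
    have e1 := K2fst y
    have e2 := K2snd y
    rw [e1, e2, mul_sub, sqrt3_inv] at h3
    linarith
  · -- the boundary points x_lam
    rintro lam ⟨hl0, hl1⟩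
    have hx1 : (lam • v1 + (1 - lam) • v2).1 = lam * (1/Real.sqrt 3) := by
      simp [v1, v2]
    have hx2 : (lam • v1 + (1 - lam) • v2).2 = 1 - lam := by
      simp [v1, v2]
    constructor
    · rw [triOpen.frontier_eq, Set.mem_diff, closTri, Set.mem_setOf_eq, hx1, hx2]
      have hsum : Real.sqrt 3 * (lam * (1/Real.sqrt 3)) + (1 - lam) = 1 := by
        rw [← mul_assoc, mul_comm (Real.sqrt 3) lam, mul_assoc, sqrt3_inv]; ring
      refine ⟨⟨by positivity, by linarith, le_of_eq hsum⟩, ?_⟩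
      rintro ⟨-, -, h⟩
      rw [hx1, hx2, hsum] at h
      exact lt_irrefl 1 h
    · apply Prod.ext
      · rw [K2fst, hx1]
        simp [v1, v2]; ring
      · rw [K2snd, hx2]
        simp [v1, v2]
  · -- non-admissibility
    intro d₁ d₂ hd₁ hd₂
    refine ⟨fun p => p.1 * (1/Real.sqrt 3 - p.1) * p.2 * (1 - p.2) * p.2, by fun_prop, ?_, ?_⟩
    · intro x hx
      have hRopen : IsOpen Rect' := (isOpen_Ioo).prod isOpen_Ioo
      rw [hRopen.frontier_eq, closRect, Set.mem_diff] at hx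
      obtain ⟨hmem, hnot⟩ := hx
      simp only [Set.mem_prod, Set.mem_Icc] at hmem
      obtain ⟨⟨ha, hb⟩, hc, hd⟩ := hmem
      show x.1 * (1/Real.sqrt 3 - x.1) * x.2 * (1 - x.2) * x.2 = 0
      rcases eq_or_lt_of_le ha with h1 | h1
      · rw [← h1]; ring
      · rcases eq_or_lt_of_le hb with h2 | h2
        · rw [h2]; ring
        · rcases eq_or_lt_of_le hc with h3 | h3
          · rw [← h3]; ring
          · rcases eq_or_lt_of_le hd with h4 | h4
            · rw [h4]; ring
            · exact absurd ⟨⟨h1, h2⟩, h3, h4⟩ hnot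
    · have hq : Real.sqrt 3 * (1/(4*Real.sqrt 3)) = 1/4 := by
        rw [mul_one_div, div_eq_iff (by positivity)]; ring
      have key : (1/(4*Real.sqrt 3)) * (1/Real.sqrt 3 - 1/(4*Real.sqrt 3)) = (1/16 : ℝ) := by
        field_simp
        nlinarith [sqrt3_sq]
      refine ⟨((1/(4*Real.sqrt 3), 3/4) : ℝ×ℝ), ?_, ?_⟩
      · rw [triOpen.frontier_eq, Set.mem_diff, closTri, Set.mem_setOf_eq]
        constructor
        · refine ⟨by positivity, by norm_num, ?_⟩
          show Real.sqrt 3 * (1/(4*Real.sqrt 3)) + (3/4 : ℝ) ≤ 1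
          rw [hq]; norm_num
        · rintro ⟨-, -, h⟩
          have h' : Real.sqrt 3 * (1/(4*Real.sqrt 3)) + (3/4 : ℝ) < 1 := h
          rw [hq] at h'; norm_num at h'
      · have e1 : (fun p : ℝ×ℝ => p.1 * (1/Real.sqrt 3 - p.1) * p.2 * (1 - p.2) * p.2)
            ((1/(4*Real.sqrt 3), 3/4) : ℝ×ℝ) = 9/1024 := by
          show (1/(4*Real.sqrt 3)) * (1/Real.sqrt 3 - 1/(4*Real.sqrt 3)) * (3/4)
              * (1 - 3/4) * (3/4) = 9/1024
          rw [show (1/(4*Real.sqrt 3)) * (1/Real.sqrt 3 - 1/(4*Real.sqrt 3)) * (3/4)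
              * (1 - 3/4) * ((3:ℝ)/4)
              = ((1/(4*Real.sqrt 3)) * (1/Real.sqrt 3 - 1/(4*Real.sqrt 3))) * (9/64) from by
            ring, key]
          norm_num
        have e2 : (fun p : ℝ×ℝ => p.1 * (1/Real.sqrt 3 - p.1) * p.2 * (1 - p.2) * p.2)
            (K2' ((1/(4*Real.sqrt 3), 3/4) : ℝ×ℝ)) = 3/1024 := by
          simp only [K2fst, K2snd]
          show (1/Real.sqrt 3 - 1/(4*Real.sqrt 3)) * (1/Real.sqrt 3 - (1/Real.sqrt 3 - 1/(4*Real.sqrt 3)))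
              * (1 - 3/4) * (1 - (1 - 3/4)) * (1 - 3/4) = 3/1024
          rw [show (1/Real.sqrt 3 - 1/(4*Real.sqrt 3)) * (1/Real.sqrt 3 - (1/Real.sqrt 3 - 1/(4*Real.sqrt 3)))
              * (1 - 3/4) * (1 - (1 - 3/4)) * (1 - (3:ℝ)/4)
              = ((1/(4*Real.sqrt 3)) * (1/Real.sqrt 3 - 1/(4*Real.sqrt 3))) * (3/64) from by
            ring, key]
          norm_num
        rw [e1, e2]
        rcases hd₁ with rfl | rfl <;> rcases hd₂ with rfl | rfl <;> norm_num
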